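/- arXiv:2510.03763 — 3 statements merged into one kernel-verified Lean document; each statement's English description precedes it below -/
import Mathlib

section
/- Let E be a finite-dimensional real inner product space, let ρ > 0, and let L : E → ℝ be twice continuously differentiable. Fix a point w ∈ E with gradient L w ≠ 0, and let H_w := fderiv ℝ (gradient L) w denote the Hessian of L at w, assumed positive semidefinite (⟪H_w v, v⟫ ≥ 0 for all v ∈ E). Then the gradient at w of the function u ↦ ρ * ‖gradient L u‖ has norm at most ρ times the trace of H_w; equivalently, since the Hessian of a C² function is self-adjoint and positive semidefinite, the norm of the gradient of the penalty term ρ‖∇L(w)‖ is at most ρ times the sum of the eigenvalues of the Hessian. -/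
open RealInnerProductSpace

lemma norm_apply_le_trace_mul
    {E : Type*} [NormedAddCommGroup E] [InnerProductSpace ℝ E] [FiniteDimensional ℝ E]
    (T : E →ₗ[ℝ] E) (hT : T.IsSymmetric) (hpsd : ∀ v : E, 0 ≤ ⟪T v, v⟫) (v : E) :
    ‖T v‖ ≤ LinearMap.trace ℝ E T * ‖v‖ := by
  classical
  set n := Module.finrank ℝ E with hn'
  have hn : Module.finrank ℝ E = n := rfl
  set b := hT.eigenvectorBasis hn with hb
  set μ := hT.eigenvalues hn with hμ
  have happ : ∀ i, T (b i) = μ i • b i := fun i => by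
    exact_mod_cast hT.apply_eigenvectorBasis hn i
  have hnorm1 : ∀ i, ‖b i‖ = 1 := fun i => b.orthonormal.1 i
  have hμ0 : ∀ i, 0 ≤ μ i := by
    intro i
    have := hpsd (b i)
    rw [happ i, real_inner_smul_left, real_inner_self_eq_norm_sq, hnorm1 i] at this
    simpa using this
  have htr : LinearMap.trace ℝ E T = ∑ i, μ i := by
    rw [LinearMap.trace_eq_matrix_trace ℝ b.toBasis T, Matrix.trace]
    congr 1
    ext i
    rw [Matrix.diag_apply, LinearMap.toMatrix_apply, OrthonormalBasis.coe_toBasis,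
      OrthonormalBasis.coe_toBasis_repr_apply, happ i, map_smul, b.repr_self i]
    simp [EuclideanSpace.single_apply]
  have htr0 : 0 ≤ LinearMap.trace ℝ E T := htr ▸ Finset.sum_nonneg fun i _ => hμ0 i
  have hμle : ∀ i, μ i ≤ LinearMap.trace ℝ E T := by
    intro i
    rw [htr]
    exact Finset.single_le_sum (fun j _ => hμ0 j) (Finset.mem_univ i)
  -- Parseval
  have hpars : ∀ x : E, ‖x‖ ^ 2 = ∑ i, (b.repr x i) ^ 2 := by
    intro x
    rw [← real_inner_self_eq_norm_sq, ← b.sum_inner_mul_inner x x]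
    congr 1; ext i
    simp [b.repr_apply_apply, sq, real_inner_comm]
  have hrepr : ∀ i, b.repr (T v) i = μ i * b.repr v i := by
    intro i
    rw [b.repr_apply_apply, ← hT (b i) v, happ i, real_inner_smul_left, b.repr_apply_apply]
  have key : ‖T v‖ ^ 2 ≤ (LinearMap.trace ℝ E T * ‖v‖) ^ 2 := by
    rw [hpars (T v)]
    have : (LinearMap.trace ℝ E T * ‖v‖) ^ 2
        = ∑ i, (LinearMap.trace ℝ E T) ^ 2 * (b.repr v i) ^ 2 := by
      rw [← Finset.mul_sum, ← hpars v]; ring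
    rw [this]
    refine Finset.sum_le_sum fun i _ => ?_
    rw [hrepr i, mul_pow]
    have : (μ i) ^ 2 ≤ (LinearMap.trace ℝ E T) ^ 2 :=
      pow_le_pow_left₀ (hμ0 i) (hμle i) 2
    exact mul_le_mul_of_nonneg_right this (sq_nonneg _)
  have h2 : 0 ≤ LinearMap.trace ℝ E T * ‖v‖ := mul_nonneg htr0 (norm_nonneg v)
  exact (pow_le_pow_iff_left₀ (norm_nonneg _) h2 two_ne_zero).mp key

lemma trace_nonneg_of_psd
    {E : Type*} [NormedAddCommGroup E] [InnerProductSpace ℝ E] [FiniteDimensional ℝ E]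
    (T : E →ₗ[ℝ] E) (hpsd : ∀ v : E, 0 ≤ ⟪T v, v⟫) :
    0 ≤ LinearMap.trace ℝ E T := by
  classical
  let b := stdOrthonormalBasis ℝ E
  rw [LinearMap.trace_eq_matrix_trace ℝ b.toBasis T, Matrix.trace]
  refine Finset.sum_nonneg fun i _ => ?_
  rw [Matrix.diag_apply, LinearMap.toMatrix_apply, OrthonormalBasis.coe_toBasis,
    OrthonormalBasis.coe_toBasis_repr_apply, b.repr_apply_apply]
  rw [real_inner_comm]
  exact hpsd (b i)


/-- **Theorem 1 (ARSAM paper), inner-product-space form.**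
The norm of the gradient of the penalty term `ρ‖∇L(w)‖` (the PSF of SAM) is bounded by
`ρ` times the trace of the Hessian `∇²L(w)`, assumed positive semidefinite. -/
theorem psf_norm_le_rho_mul_trace_hessian
    {E : Type*} [NormedAddCommGroup E] [InnerProductSpace ℝ E] [FiniteDimensional ℝ E]
    (ρ : ℝ) (hρ : 0 < ρ) (L : E → ℝ) (hL : ContDiff ℝ 2 L) (w : E)
    (hw : gradient L w ≠ 0)
    (hpsd : ∀ v : E, 0 ≤ ⟪(fderiv ℝ (gradient L) w) v, v⟫) :
    ‖gradient (fun u => ρ * ‖gradient L u‖) w‖ ≤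
      ρ * LinearMap.trace ℝ E (fderiv ℝ (gradient L) w : E →ₗ[ℝ] E) := by
  classical
  set H := fderiv ℝ (gradient L) w with hH
  -- the gradient is C¹
  have hgradeq : gradient L = fun u => (InnerProductSpace.toDual ℝ E).symm (fderiv ℝ L u) := rfl
  have hfd : ContDiff ℝ 1 (fderiv ℝ L) := hL.fderiv_right (by norm_num)
  have hg : ContDiff ℝ 1 (gradient L) := by
    rw [hgradeq]
    exact (InnerProductSpace.toDual ℝ E).symm.contDiff.comp hfd
  have hgw : DifferentiableAt ℝ (gradient L) w := (hg.differentiable one_ne_zero) w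
  have hnd : DifferentiableAt ℝ (fun u => ‖gradient L u‖) w := hgw.norm ℝ hw
  -- H is symmetric
  have hsym2 : IsSymmSndFDerivAt ℝ L w := hL.contDiffAt.isSymmSndFDerivAt (by simp [minSmoothness_of_isRCLikeNormedField])
  have h1 : ∀ a b : E, ⟪b, H a⟫ = fderiv ℝ (fderiv ℝ L) w a b := by
    intro a b
    have e1 : HasFDerivAt (fun x => (inner ℝ b (gradient L x) : ℝ))
        ((innerSL ℝ b).comp H) w :=
      (innerSL ℝ b).hasFDerivAt.comp w hgw.hasFDerivAt
    have e2 : (fun x => (inner ℝ b (gradient L x) : ℝ)) = fun x => fderiv ℝ L x b := by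
      funext x
      rw [real_inner_comm]
      exact InnerProductSpace.toDual_symm_apply
    rw [e2] at e1
    have e3 : HasFDerivAt (fun x => fderiv ℝ L x b)
        ((ContinuousLinearMap.apply ℝ ℝ b).comp (fderiv ℝ (fderiv ℝ L) w)) w :=
      (ContinuousLinearMap.apply ℝ ℝ b).hasFDerivAt.comp w
        ((hfd.differentiable one_ne_zero) w).hasFDerivAt
    have := e1.unique e3
    have := congrArg (fun (Φ : E →L[ℝ] ℝ) => Φ a) this
    simpa using this
  have hHsymm : (H : E →ₗ[ℝ] E).IsSymmetric := by
    intro u v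
    show ⟪H u, v⟫ = ⟪u, H v⟫
    calc ⟪H u, v⟫ = ⟪v, H u⟫ := real_inner_comm _ _
      _ = fderiv ℝ (fderiv ℝ L) w u v := h1 u v
      _ = fderiv ℝ (fderiv ℝ L) w v u := hsym2.eq u v
      _ = ⟪u, H v⟫ := (h1 v u).symm
  -- norm of gradient = norm of fderiv
  have hgrad_norm : ‖gradient (fun u => ρ * ‖gradient L u‖) w‖
      = ρ * ‖fderiv ℝ (fun u => ‖gradient L u‖) w‖ := by
    rw [gradient, LinearIsometryEquiv.norm_map, fderiv_const_mul hnd ρ, norm_smul,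
      Real.norm_eq_abs, abs_of_pos hρ]
  -- the fderiv of the norm of the gradient is bounded by ‖H‖
  have hDn : ‖fderiv ℝ (fun u => ‖gradient L u‖) w‖ ≤ ‖H‖ := by
    refine le_of_forall_pos_le_add fun ε hε => ?_
    set K : NNReal := ‖H‖₊ + ⟨ε, hε.le⟩ with hK
    have hKlt : ‖H‖₊ < K := by
      rw [hK]
      exact lt_add_of_pos_right _ (by exact_mod_cast hε)
    obtain ⟨t, ht, hlip⟩ := (hg.contDiffAt).exists_lipschitzOnWith_of_nnnorm_lt K hKlt
    have hlip2 : LipschitzOnWith K (fun u => ‖gradient L u‖) t := by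
      simpa [Function.comp_def] using lipschitzWith_one_norm.comp_lipschitzOnWith hlip
    have := (hnd.hasFDerivAt).le_of_lipschitzOn ht hlip2
    exact this.trans_eq (by rw [hK]; rfl)
  -- ‖H‖ ≤ trace H
  have htr0 : 0 ≤ LinearMap.trace ℝ E (H : E →ₗ[ℝ] E) :=
    trace_nonneg_of_psd _ hpsd
  have hHle : ‖H‖ ≤ LinearMap.trace ℝ E (H : E →ₗ[ℝ] E) := by
    refine ContinuousLinearMap.opNorm_le_bound H htr0 fun v => ?_
    exact norm_apply_le_trace_mul (H : E →ₗ[ℝ] E) hHsymm hpsd v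
  calc ‖gradient (fun u => ρ * ‖gradient L u‖) w‖
      = ρ * ‖fderiv ℝ (fun u => ‖gradient L u‖) w‖ := hgrad_norm
    _ ≤ ρ * ‖H‖ := by exact mul_le_mul_of_nonneg_left hDn hρ.le
    _ ≤ ρ * LinearMap.trace ℝ E (H : E →ₗ[ℝ] E) := mul_le_mul_of_nonneg_left hHle hρ.le
end

section
/- Let E be a finite-dimensional real inner product space, ρ ≥ 0, and L : E → ℝ twice continuously differentiable. Fix w ∈ E with g := gradient L w ≠ 0. Then the function u ↦ L u + ρ * ‖gradient L u‖ is differentiable at w and its gradient at w equals g + (ρ / ‖g‖) • ((fderiv ℝ (gradient L) w) g); that is, the gradient of the SAM objective L(w) + ρ‖∇L(w)‖ decomposes as the SGD gradient ∇L(w) plus the PSF term ρ · ∇²L(w) ∇L(w) / ‖∇L(w)‖. -/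
open InnerProductSpace Real

lemma hasFDerivAt_norm_aux {E : Type*} [NormedAddCommGroup E] [InnerProductSpace ℝ E]
    [CompleteSpace E] {x : E} (hx : x ≠ 0) :
    HasFDerivAt (fun y : E => ‖y‖) ((InnerProductSpace.toDual ℝ E) (‖x‖⁻¹ • x)) x := by
  have h1 : HasFDerivAt (fun y : E => ‖y‖ ^ 2) (2 • innerSL ℝ x) x :=
    (hasStrictFDerivAt_norm_sq x).hasFDerivAt
  have h2 : (‖x‖ : ℝ) ^ 2 ≠ 0 := pow_ne_zero 2 (norm_ne_zero_iff.mpr hx)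
  have h3 : HasFDerivAt (fun y : E => Real.sqrt (‖y‖ ^ 2))
      ((1 / (2 * Real.sqrt (‖x‖ ^ 2))) • (2 • innerSL ℝ x)) x :=
    (Real.hasDerivAt_sqrt h2).comp_hasFDerivAt x h1
  have h4 : (fun y : E => Real.sqrt (‖y‖ ^ 2)) = fun y : E => ‖y‖ := by
    ext y; rw [Real.sqrt_sq (norm_nonneg y)]
  rw [h4] at h3
  convert h3 using 1
  ext v
  simp only [InnerProductSpace.toDual_apply_apply, ContinuousLinearMap.smul_apply,
    ContinuousLinearMap.smul_apply, innerSL_apply_apply, Real.sqrt_sq (norm_nonneg x)]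
  rw [real_inner_smul_left]
  have : ‖x‖ ≠ 0 := norm_ne_zero_iff.mpr hx
  field_simp
  simp only [smul_eq_mul]
  field_simp
  rw [nsmul_eq_mul]
  push_cast
  ring

/-- **Gradient decomposition of SAM (Eqs. (6)–(7) of the ARSAM paper).**
For a `C²` loss `L` with nonvanishing gradient at `w`, the SAM objective
`u ↦ L u + ρ‖∇L(u)‖` is differentiable at `w` and its gradient there decomposes as the
SGD gradient `∇L(w)` plus the PSF term `ρ · ∇²L(w) ∇L(w) / ‖∇L(w)‖`. -/
theorem gradient_sam_decomposition
    {E : Type*} [NormedAddCommGroup E] [InnerProductSpace ℝ E] [FiniteDimensional ℝ E]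
    (ρ : ℝ) (hρ : 0 ≤ ρ) (L : E → ℝ) (hL : ContDiff ℝ 2 L) (w : E)
    (hg : gradient L w ≠ 0) :
    DifferentiableAt ℝ (fun u => L u + ρ * ‖gradient L u‖) w ∧
      gradient (fun u => L u + ρ * ‖gradient L u‖) w =
        gradient L w +
          (ρ / ‖gradient L w‖) • ((fderiv ℝ (gradient L) w) (gradient L w)) := by
  set g := gradient L w with hgdef
  set H := fderiv ℝ (gradient L) w with hHdef
  -- fderiv L is C¹, hence gradient L is C¹
  have hfd : ContDiff ℝ 1 (fderiv ℝ L) := hL.fderiv_right (le_refl 2)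
  have hgradeq : gradient L = fun u => (InnerProductSpace.toDual ℝ E).symm (fderiv ℝ L u) := rfl
  have hgradC1 : ContDiff ℝ 1 (gradient L) := by
    rw [hgradeq]
    exact (InnerProductSpace.toDual ℝ E).symm.contDiff.comp hfd
  have hHdiff : DifferentiableAt ℝ (gradient L) w :=
    (hgradC1.differentiable one_ne_zero) w
  have hH : HasFDerivAt (gradient L) H w := hHdiff.hasFDerivAt
  -- relation between H and second derivative of L
  have hf'd : DifferentiableAt ℝ (fderiv ℝ L) w := (hfd.differentiable one_ne_zero) w
  have hHinner : ∀ u v : E, ⟪H u, v⟫_ℝ = fderiv ℝ (fderiv ℝ L) w u v := by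
    intro u v
    have A : HasFDerivAt (fun x => (innerSL ℝ v) (gradient L x)) ((innerSL ℝ v).comp H) w :=
      ((innerSL ℝ v).hasFDerivAt).comp w hH
    have B : HasFDerivAt (fun x => (ContinuousLinearMap.apply ℝ ℝ v) (fderiv ℝ L x))
        ((ContinuousLinearMap.apply ℝ ℝ v).comp (fderiv ℝ (fderiv ℝ L) w)) w :=
      ((ContinuousLinearMap.apply ℝ ℝ v).hasFDerivAt).comp w hf'd.hasFDerivAt
    have hfun : (fun x => (innerSL ℝ v) (gradient L x)) =
        fun x => (ContinuousLinearMap.apply ℝ ℝ v) (fderiv ℝ L x) := by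
      funext x
      simp only [innerSL_apply_apply, ContinuousLinearMap.apply_apply]
      rw [real_inner_comm]
      exact InnerProductSpace.toDual_symm_apply
    rw [hfun] at A
    have hAB := A.unique B
    have h2 := congrArg (fun T : E →L[ℝ] ℝ => T u) hAB
    simp only [ContinuousLinearMap.comp_apply, innerSL_apply_apply,
      ContinuousLinearMap.apply_apply] at h2
    rw [real_inner_comm] at h2
    exact h2
  have hsymm : ∀ u v : E, ⟪H u, v⟫_ℝ = ⟪H v, u⟫_ℝ := by
    intro u v
    rw [hHinner, hHinner]
    exact (hL.contDiffAt.isSymmSndFDerivAt (by simp)).eq u v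
  -- derivative of the norm term
  have hnorm := hasFDerivAt_norm_aux hg
  have hN : HasFDerivAt (fun u => ‖gradient L u‖)
      (((InnerProductSpace.toDual ℝ E) (‖g‖⁻¹ • g)).comp H) w := hnorm.comp w hH
  have hLd : HasFDerivAt L (fderiv ℝ L w) w :=
    ((hL.differentiable (by norm_num)) w).hasFDerivAt
  have hsum : HasFDerivAt (fun u => L u + ρ * ‖gradient L u‖)
      (fderiv ℝ L w + ρ • (((InnerProductSpace.toDual ℝ E) (‖g‖⁻¹ • g)).comp H)) w :=
    hLd.add (hN.const_mul ρ)
  have hkey : (InnerProductSpace.toDual ℝ E) (g + (ρ / ‖g‖) • H g) =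
      fderiv ℝ L w + ρ • (((InnerProductSpace.toDual ℝ E) (‖g‖⁻¹ • g)).comp H) := by
    ext v
    have hfLw : fderiv ℝ L w = (InnerProductSpace.toDual ℝ E) g := by
      rw [hgdef]
      exact ((InnerProductSpace.toDual ℝ E).apply_symm_apply (fderiv ℝ L w)).symm
    simp only [hfLw, map_add, ContinuousLinearMap.add_apply, InnerProductSpace.toDual_apply_apply,
      ContinuousLinearMap.smul_apply, ContinuousLinearMap.comp_apply, smul_eq_mul]
    rw [real_inner_smul_left, real_inner_smul_left]
    have e1 : ⟪g, H v⟫_ℝ = ⟪H g, v⟫_ℝ := by rw [real_inner_comm]; exact hsymm v g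
    rw [e1, div_eq_mul_inv]
    ring
  have hGrad : HasGradientAt (fun u => L u + ρ * ‖gradient L u‖)
      (g + (ρ / ‖g‖) • H g) w := by
    rw [hasGradientAt_iff_hasFDerivAt, hkey]
    exact hsum
  exact ⟨hGrad.hasFDerivAt.differentiableAt, hGrad.gradient⟩
end

section
/- Let E be a finite-dimensional real inner product space, let H : E →L[ℝ] E be a self-adjoint positive semidefinite continuous linear map, and let g : E → E be a map with g u ≠ 0 and ‖g u‖ ≤ G for all u ∈ E, such that the normalized map ν : E → E, ν u := (1/‖g u‖) • g u, is Lipschitz with constant τ. Let η ≥ 0 and let w : ℕ → E be iterates satisfying w (k+1) = w k - η • g (w k) for all k. Then for all t and n, ‖H (ν (w (t+n))) - H (ν (w t))‖ ≤ n · η · τ · (trace H) · G. -/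
open RealInnerProductSpace

theorem norm_le_trace_mul
    {E : Type*} [NormedAddCommGroup E] [InnerProductSpace ℝ E] [FiniteDimensional ℝ E]
    (H : E →L[ℝ] E) (hsa : ∀ x y : E, ⟪H x, y⟫ = ⟪x, H y⟫)
    (hpsd : ∀ x : E, 0 ≤ ⟪H x, x⟫) :
    (0 ≤ LinearMap.trace ℝ E (H : E →ₗ[ℝ] E)) ∧
    ∀ z : E, ‖H z‖ ≤ LinearMap.trace ℝ E (H : E →ₗ[ℝ] E) * ‖z‖ := by
  classical
  set T : E →ₗ[ℝ] E := (H : E →ₗ[ℝ] E)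
  have hT : T.IsSymmetric := fun x y => hsa x y
  set n := Module.finrank ℝ E with hn
  have hnn : Module.finrank ℝ E = n := rfl
  set b := hT.eigenvectorBasis hnn
  set μ := hT.eigenvalues hnn with hμ
  have hμ0 : ∀ i, 0 ≤ μ i := by
    intro i
    have h1 : T (b i) = (μ i : ℝ) • b i := hT.apply_eigenvectorBasis hnn i
    have h2 : ⟪H (b i), b i⟫ = μ i := by
      have : ⟪T (b i), b i⟫ = μ i * ⟪b i, b i⟫ := by rw [h1, real_inner_smul_left]
      have hb : ⟪b i, b i⟫ = 1 := by
        rw [real_inner_self_eq_norm_sq, b.orthonormal.1 i]; norm_num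
      have h' : ⟪T (b i), b i⟫ = μ i := by simpa [hb] using this
      exact h'
    rw [← h2]; exact hpsd (b i)
  have htr : LinearMap.trace ℝ E T = ∑ i, μ i := by
    rw [LinearMap.trace_eq_matrix_trace ℝ b.toBasis, Matrix.trace]
    congr 1; ext i
    simp only [Matrix.diag_apply, LinearMap.toMatrix_apply, OrthonormalBasis.coe_toBasis,
      hT.apply_eigenvectorBasis hnn i, map_smul]
    rw [show T (b i) = μ i • b i from hT.apply_eigenvectorBasis hnn i]
    simp [OrthonormalBasis.coe_toBasis_repr_apply, OrthonormalBasis.repr_self,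
      EuclideanSpace.single_apply]
  have htr0 : 0 ≤ LinearMap.trace ℝ E T := by
    rw [htr]; exact Finset.sum_nonneg fun i _ => hμ0 i
  refine ⟨htr0, fun z => ?_⟩
  have hμtr : ∀ i, μ i ≤ LinearMap.trace ℝ E T := by
    intro i; rw [htr]
    exact Finset.single_le_sum (fun j _ => hμ0 j) (Finset.mem_univ i)
  set tr := LinearMap.trace ℝ E T with htrdef
  have h1 : ‖H z‖ = ‖b.repr (H z)‖ := (b.repr.norm_map (H z)).symm
  have h2 : ‖z‖ = ‖b.repr z‖ := (b.repr.norm_map z).symm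
  rw [h1, h2, EuclideanSpace.norm_eq, EuclideanSpace.norm_eq]
  have key : ∀ i, ‖b.repr (H z) i‖ ^ 2 ≤ tr ^ 2 * ‖b.repr z i‖ ^ 2 := by
    intro i
    have : b.repr (T z) i = μ i * b.repr z i := hT.eigenvectorBasis_apply_self_apply hnn z i
    have hHz : b.repr (H z) i = μ i * b.repr z i := this
    rw [hHz]
    have h3 : ‖μ i * b.repr z i‖ = μ i * ‖b.repr z i‖ := by
      rw [norm_mul, Real.norm_of_nonneg (hμ0 i)]
    rw [h3, mul_pow]
    have : μ i ^ 2 ≤ tr ^ 2 := by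
      apply pow_le_pow_left₀ (hμ0 i) (hμtr i)
    nlinarith [sq_nonneg (‖b.repr z i‖)]
  calc Real.sqrt (∑ i, ‖b.repr (H z) i‖ ^ 2)
      ≤ Real.sqrt (∑ i, tr ^ 2 * ‖b.repr z i‖ ^ 2) := by
        apply Real.sqrt_le_sqrt
        exact Finset.sum_le_sum fun i _ => key i
    _ = tr * Real.sqrt (∑ i, ‖b.repr z i‖ ^ 2) := by
        rw [← Finset.mul_sum, Real.sqrt_mul (sq_nonneg tr), Real.sqrt_sq htr0]

/-- **Theorem 3 (ARSAM paper), deterministic core: PSF reuse error bound.**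
Let `H` be a self-adjoint positive semidefinite continuous linear map (the Hessian),
`g` a nonvanishing gradient field with `‖g u‖ ≤ G`, whose normalization
`ν u = g u / ‖g u‖` is `τ`-Lipschitz, and let `w` be gradient-descent iterates with step
size `η`. Then the error between the PSF at iteration `t + n` and the PSF reused from
iteration `t` is bounded by `n · η · τ · (trace H) · G`. -/
theorem psf_reuse_error_bound
    {E : Type*} [NormedAddCommGroup E] [InnerProductSpace ℝ E] [FiniteDimensional ℝ E]
    (H : E →L[ℝ] E) (hsa : ∀ x y : E, ⟪H x, y⟫ = ⟪x, H y⟫)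
    (hpsd : ∀ x : E, 0 ≤ ⟪H x, x⟫)
    (g : E → E) (G : ℝ) (hg0 : ∀ u : E, g u ≠ 0) (hgG : ∀ u : E, ‖g u‖ ≤ G)
    (ν : E → E) (hν : ∀ u : E, ν u = (1 / ‖g u‖) • g u)
    (τ : ℝ) (hlip : ∀ u v : E, ‖ν u - ν v‖ ≤ τ * ‖u - v‖)
    (η : ℝ) (hη : 0 ≤ η)
    (w : ℕ → E) (hw : ∀ k : ℕ, w (k + 1) = w k - η • g (w k)) :
    ∀ t n : ℕ, ‖H (ν (w (t + n))) - H (ν (w t))‖ ≤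
      n * η * τ * LinearMap.trace ℝ E (H : E →ₗ[ℝ] E) * G := by
  obtain ⟨htr0, hbound⟩ := norm_le_trace_mul H hsa hpsd
  set tr := LinearMap.trace ℝ E (H : E →ₗ[ℝ] E) with htrdef
  have hG0 : 0 < G := lt_of_lt_of_le (norm_pos_iff.mpr (hg0 0)) (hgG 0)
  have hτ0 : 0 ≤ τ := by
    have h1 := hlip 0 (g 0)
    have h2 : (0:ℝ) < ‖(0:E) - g 0‖ := by
      rw [zero_sub, norm_neg]; exact norm_pos_iff.mpr (hg0 0)
    nlinarith [norm_nonneg (ν 0 - ν (g 0))]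
  have hstep : ∀ t n : ℕ, ‖w (t + n) - w t‖ ≤ n * η * G := by
    intro t n
    induction n with
    | zero => simp
    | succ m ih =>
      have h1 : w (t + (m + 1)) = w (t + m) - η • g (w (t + m)) := by
        rw [← hw (t + m)]; ring_nf
      have h2 : w (t + (m + 1)) - w t = (w (t + m) - w t) - η • g (w (t + m)) := by
        rw [h1]; abel
      calc ‖w (t + (m + 1)) - w t‖
          ≤ ‖w (t + m) - w t‖ + ‖η • g (w (t + m))‖ := by
            rw [h2]; exact norm_sub_le _ _
        _ ≤ m * η * G + η * G := by
            refine add_le_add ih ?_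
            rw [norm_smul, Real.norm_of_nonneg hη]
            exact mul_le_mul_of_nonneg_left (hgG _) hη
        _ = (m + 1 : ℕ) * η * G := by push_cast; ring
  intro t n
  have h1 : H (ν (w (t + n))) - H (ν (w t)) = H (ν (w (t + n)) - ν (w t)) := by
    rw [map_sub]
  calc ‖H (ν (w (t + n))) - H (ν (w t))‖
      = ‖H (ν (w (t + n)) - ν (w t))‖ := by rw [h1]
    _ ≤ tr * ‖ν (w (t + n)) - ν (w t)‖ := hbound _
    _ ≤ tr * (τ * ‖w (t + n) - w t‖) :=
        mul_le_mul_of_nonneg_left (hlip _ _) htr0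
    _ ≤ tr * (τ * (n * η * G)) := by
        refine mul_le_mul_of_nonneg_left (mul_le_mul_of_nonneg_left (hstep t n) hτ0) htr0
    _ = n * η * τ * tr * G := by ring
end
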